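/- For all n, p ≥ 1, the number of nonempty intervals F ⊆ {1,...,n} with p·min F ≥ |F| equals the number of edges of the Turán graph on n+1 vertices with p+1 parts. -/
import Mathlib

/-- Number of edges of the Turán graph on n vertices with p parts. -/
def turanEdges (n p : ℕ) : ℕ :=
  n.choose 2 - ((n % p) * (n / p + 1).choose 2 + (p - n % p) * (n / p).choose 2)

/-- Number of nonempty intervals F ⊆ {1,...,n} with p·min F ≥ |F|. -/
noncomputable def Sr (n p : ℕ) : ℕ :=
  Nat.card {F : Finset ℕ //
    (∃ a b : ℕ, a ≤ b ∧ F = Finset.Icc a b) ∧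
    F ⊆ Finset.Icc 1 n ∧
    p * sInf (F : Set ℕ) ≥ F.card}

lemma choose_succ_two (q : ℕ) : (q + 1).choose 2 = q.choose 2 + q := by
  rw [show (2:ℕ) = 1 + 1 from rfl, Nat.choose_succ_succ, Nat.choose_one_right]
  exact Nat.add_comm _ _

/-- The subtracted part of the Turán edge formula. -/
def Bpart (m r : ℕ) : ℕ :=
  (m % r) * ((m / r + 1).choose 2) + (r - m % r) * ((m / r).choose 2)

lemma Bpart_succ (m r : ℕ) (hr : 1 ≤ r) : Bpart (m + 1) r = Bpart m r + m / r := by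
  set q := m / r with hq
  set s := m % r with hs
  have hm : r * q + s = m := Nat.div_add_mod m r
  have hslt : s < r := Nat.mod_lt _ hr
  have hm1 : m + 1 = (s + 1) + r * q := by omega
  have hmod : (m + 1) % r = (s + 1) % r := by rw [hm1, Nat.add_mul_mod_self_left]
  have hdiv : (m + 1) / r = (s + 1) / r + q := by
    rw [hm1, Nat.add_mul_div_left _ _ (by omega : 0 < r)]
  rcases lt_or_eq_of_le (by omega : s + 1 ≤ r) with h | h
  · have hmod' : (m + 1) % r = s + 1 := by rw [hmod, Nat.mod_eq_of_lt h]
    have hdiv' : (m + 1) / r = q := by rw [hdiv, Nat.div_eq_of_lt h]; omega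
    unfold Bpart
    rw [hmod', hdiv', ← hq, ← hs, choose_succ_two q]
    have : r - s = (r - (s + 1)) + 1 := by omega
    rw [this]; ring
  · have hmod' : (m + 1) % r = 0 := by rw [hmod, ← h, Nat.mod_self]
    have hdiv' : (m + 1) / r = q + 1 := by
      rw [hdiv, ← h, Nat.div_self (by omega : 0 < s + 1)]; omega
    unfold Bpart
    rw [hmod', hdiv', ← hq, ← hs, choose_succ_two q]
    have hrs : r - s = 1 := by omega
    have hr' : r = s + 1 := by omega
    rw [hrs, hr']
    simp only [Nat.sub_zero]
    ring

lemma Bpart_le (m r : ℕ) (hr : 1 ≤ r) : Bpart m r ≤ m.choose 2 := by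
  induction m with
  | zero => simp [Bpart, Nat.zero_div, Nat.zero_mod]
  | succ m ih =>
    rw [Bpart_succ m r hr, choose_succ_two]
    have := Nat.div_le_self m r
    omega

lemma turan_succ (m r : ℕ) (hr : 1 ≤ r) :
    turanEdges (m + 1) r = turanEdges m r + (m - m / r) := by
  have h1 : turanEdges (m + 1) r = (m + 1).choose 2 - Bpart (m + 1) r := rfl
  have h2 : turanEdges m r = m.choose 2 - Bpart m r := rfl
  rw [h1, h2, Bpart_succ m r hr, choose_succ_two]
  have hle := Bpart_le m r hr
  have := Nat.div_le_self m r
  omega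

lemma turan_sum (n p : ℕ) :
    turanEdges (n + 1) (p + 1) = ∑ b ∈ Finset.range (n + 1), (b - b / (p + 1)) := by
  induction n with
  | zero =>
    simp [turanEdges]
  | succ n ih =>
    rw [turan_succ (n + 1) (p + 1) (by omega), ih]
    conv_rhs => rw [Finset.sum_range_succ]

/-- The set of valid pairs (a, b). -/
def Tpairs (n p : ℕ) : Finset (ℕ × ℕ) :=
  (Finset.Icc 1 n).biUnion (fun b => (Finset.Icc (b / (p + 1) + 1) b).image (fun a => (a, b)))

lemma mem_Tpairs {n p a b : ℕ} :
    (a, b) ∈ Tpairs n p ↔ b ≤ n ∧ b / (p + 1) < a ∧ a ≤ b := by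
  simp only [Tpairs, Finset.mem_biUnion, Finset.mem_image, Finset.mem_Icc, Prod.mk.injEq]
  constructor
  · rintro ⟨b', ⟨hb1, hb2⟩, a', ⟨ha1, ha2⟩, rfl, rfl⟩
    exact ⟨hb2, ha1, ha2⟩
  · rintro ⟨hbn, h1, h2⟩
    have ha : 0 < a := Nat.lt_of_le_of_lt (Nat.zero_le _) h1
    exact ⟨b, ⟨le_trans ha h2, hbn⟩, a, ⟨h1, h2⟩, rfl, rfl⟩

lemma card_Tpairs (n p : ℕ) :
    (Tpairs n p).card = ∑ b ∈ Finset.Icc 1 n, (b - b / (p + 1)) := by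
  rw [Tpairs, Finset.card_biUnion]
  · apply Finset.sum_congr rfl
    intro b _
    rw [Finset.card_image_of_injective _ (fun x y h => by simpa using h), Nat.card_Icc]
    omega
  · intro x _ y _ hxy
    simp only [Finset.disjoint_left, Finset.mem_image, Finset.mem_Icc]
    rintro ⟨a, b⟩ ⟨a1, _, h1⟩ ⟨a2, _, h2⟩
    apply hxy
    have e1 : b = x := congrArg Prod.snd h1.symm
    have e2 : b = y := congrArg Prod.snd h2.symm
    rw [← e1, ← e2]

theorem stmt_4 (n p : ℕ) (hn : 1 ≤ n) (hp : 1 ≤ p) :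
    Sr n p = turanEdges (n + 1) (p + 1) := by
  have hset : {F : Finset ℕ |
      (∃ a b : ℕ, a ≤ b ∧ F = Finset.Icc a b) ∧
      F ⊆ Finset.Icc 1 n ∧
      p * sInf (F : Set ℕ) ≥ F.card} =
      ↑((Tpairs n p).image (fun x => Finset.Icc x.1 x.2)) := by
    ext F
    simp only [Set.mem_setOf_eq, Finset.coe_image, Set.mem_image, Finset.mem_coe]
    constructor
    · rintro ⟨⟨a, b, hab, rfl⟩, hsub, hcard⟩
      refine ⟨(a, b), ?_, rfl⟩
      have hinf : sInf ((Finset.Icc a b : Finset ℕ) : Set ℕ) = a := by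
        rw [Finset.coe_Icc, csInf_Icc hab]
      have ha1 : 1 ≤ a ∧ a ≤ n := Finset.mem_Icc.mp
        (hsub (Finset.mem_Icc.mpr ⟨le_refl a, hab⟩))
      have hb1 : 1 ≤ b ∧ b ≤ n := Finset.mem_Icc.mp
        (hsub (Finset.mem_Icc.mpr ⟨hab, le_refl b⟩))
      rw [hinf, Nat.card_Icc] at hcard
      have hmul : b < a * (p + 1) := by
        have h2 : a * (p + 1) = p * a + a := by ring
        omega
      have hdiv : b / (p + 1) < a := (Nat.div_lt_iff_lt_mul (by omega)).mpr hmul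
      exact mem_Tpairs.mpr ⟨hb1.2, hdiv, hab⟩
    · rintro ⟨⟨a, b⟩, hT, rfl⟩
      obtain ⟨hbn, hdiv, hab⟩ := mem_Tpairs.mp hT
      have ha1 : 1 ≤ a := Nat.lt_of_le_of_lt (Nat.zero_le _) hdiv
      have hmul : b < a * (p + 1) := (Nat.div_lt_iff_lt_mul (by omega)).mp hdiv
      have hinf : sInf ((Finset.Icc a b : Finset ℕ) : Set ℕ) = a := by
        rw [Finset.coe_Icc, csInf_Icc hab]
      refine ⟨⟨a, b, hab, rfl⟩, ?_, ?_⟩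
      · intro x hx
        have hx' := Finset.mem_Icc.mp hx
        exact Finset.mem_Icc.mpr ⟨le_trans ha1 hx'.1, le_trans hx'.2 hbn⟩
      · show (Finset.Icc a b).card ≤ p * sInf ((Finset.Icc a b : Finset ℕ) : Set ℕ)
        rw [hinf, Nat.card_Icc]
        have h2 : a * (p + 1) = p * a + a := by ring
        omega
  have hinj : Set.InjOn (fun x : ℕ × ℕ => Finset.Icc x.1 x.2) ↑(Tpairs n p) := by
    rintro ⟨a, b⟩ hx ⟨a', b'⟩ hy h
    simp only [Finset.mem_coe] at hx hy
    dsimp only at h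
    obtain ⟨_, _, hab⟩ := mem_Tpairs.mp hx
    obtain ⟨_, _, hab'⟩ := mem_Tpairs.mp hy
    have h1 : a ∈ Finset.Icc a' b' := h ▸ Finset.mem_Icc.mpr ⟨le_refl a, hab⟩
    have h2 : b ∈ Finset.Icc a' b' := h ▸ Finset.mem_Icc.mpr ⟨hab, le_refl b⟩
    have h3 : a' ∈ Finset.Icc a b := h ▸ Finset.mem_Icc.mpr ⟨le_refl a', hab'⟩
    have h4 : b' ∈ Finset.Icc a b := h ▸ Finset.mem_Icc.mpr ⟨hab', le_refl b'⟩
    rw [Finset.mem_Icc] at h1 h2 h3 h4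
    simp only [Prod.mk.injEq]
    omega
  have hcardeq : Sr n p = (Tpairs n p).card := by
    have h1 : Sr n p = ({F : Finset ℕ |
        (∃ a b : ℕ, a ≤ b ∧ F = Finset.Icc a b) ∧
        F ⊆ Finset.Icc 1 n ∧
        p * sInf (F : Set ℕ) ≥ F.card} : Set (Finset ℕ)).ncard := by
      rw [Sr]
      exact Nat.card_coe_set_eq _
    rw [h1, hset, Set.ncard_coe_finset, Finset.card_image_of_injOn hinj]
  rw [hcardeq, card_Tpairs, turan_sum]
  have hins : Finset.range (n + 1) = insert 0 (Finset.Icc 1 n) := by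
    ext x; simp only [Finset.mem_range, Finset.mem_insert, Finset.mem_Icc]; omega
  rw [hins, Finset.sum_insert (by simp)]
  simp
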